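/- (Axiom 6 verification for the von Neumann reality measure: additivity over independent systems.) Let ρ and σ be density matrices on Fin dA, and let Φ² be the pinching on (Fin dA × Fin dA) by the projectors (A i) ⊗ₖ (A j) for (i,j) ∈ ι × ι (the observable A measured on each copy). Then S(Φ²(ρ ⊗ₖ σ)) − S(ρ ⊗ₖ σ) = (S(φ_A(ρ)) − S(ρ)) + (S(φ_A(σ)) − S(σ)); equivalently, the A-reality of the product state is the sum of the individual A-realities. -/

import Mathlib

open Matrix Kronecker BigOperators
open scoped ComplexOrder

/-- The single-system pinching `φ_A(σ) = ∑ i, (A i) σ (A i)`. -/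
noncomputable def pinch1 {dA : ℕ} {ι : Type*} [Fintype ι]
    (A : ι → Matrix (Fin dA) (Fin dA) ℂ)
    (σ : Matrix (Fin dA) (Fin dA) ℂ) : Matrix (Fin dA) (Fin dA) ℂ :=
  ∑ i, (A i) * σ * (A i)

/-- The pinching on two copies by the projectors `(A i) ⊗ₖ (A j)`. -/
noncomputable def pinch2 {dA : ℕ} {ι : Type*} [Fintype ι]
    (A : ι → Matrix (Fin dA) (Fin dA) ℂ)
    (M : Matrix (Fin dA × Fin dA) (Fin dA × Fin dA) ℂ) :
    Matrix (Fin dA × Fin dA) (Fin dA × Fin dA) ℂ :=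
  ∑ q : ι × ι, ((A q.1) ⊗ₖ (A q.2)) * M * ((A q.1) ⊗ₖ (A q.2))

/-- The von Neumann entropy of a Hermitian matrix, via its eigenvalues. -/
noncomputable def vnEntropy {m : Type*} [Fintype m] [DecidableEq m]
    {ρ : Matrix m m ℂ} (hρ : ρ.IsHermitian) : ℝ :=
  ∑ k, Real.negMulLog (hρ.eigenvalues k)

section Aux
open Polynomial

variable {n m : Type*} [Fintype n] [DecidableEq n] [Fintype m] [DecidableEq m]

lemma my_charpoly_diagonal {R : Type*} [CommRing R] (d : n → R) :
    (Matrix.diagonal d).charpoly = ∏ i, (X - C (d i)) := by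
  have h : charmatrix (Matrix.diagonal d) = Matrix.diagonal fun i => (X : R[X]) - C (d i) := by
    ext i j
    by_cases h : i = j
    · subst h; simp
    · simp [Matrix.charmatrix_apply_ne _ _ _ h, Matrix.diagonal_apply_ne _ h]
  rw [Matrix.charpoly, h, Matrix.det_diagonal]

lemma my_charpoly_conj {R : Type*} [CommRing R] (U V M : Matrix n n R)
    (hUV : U * V = 1) : (U * M * V).charpoly = M.charpoly := by
  have hc : charmatrix (U * M * V) = U.map C * charmatrix M * V.map C := by
    unfold charmatrix
    simp only [RingHom.mapMatrix_apply]
    rw [Matrix.mul_sub, Matrix.sub_mul]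
    congr 1
    · have h1 : U.map (C : R →+* R[X]) * Matrix.scalar n (X : R[X])
          = Matrix.scalar n (X : R[X]) * U.map C :=
        ((Matrix.scalar_commute (X : R[X]) (fun r => Commute.all _ _) (U.map C))).symm
      rw [h1, Matrix.mul_assoc, ← Matrix.map_mul, hUV]
      simp
    · rw [← Matrix.map_mul, ← Matrix.map_mul]
  rw [Matrix.charpoly, Matrix.charpoly, hc, Matrix.det_mul, Matrix.det_mul]
  have : (U.map (C : R →+* R[X])).det * (V.map C).det = 1 := by
    rw [← Matrix.det_mul, ← Matrix.map_mul, hUV]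
    simp
  rw [mul_comm (U.map (C : R →+* R[X])).det, mul_assoc, this, mul_one]

/-- If a Hermitian matrix is unitarily conjugate to a real diagonal matrix, then any
symmetric function of its eigenvalues can be computed from the diagonal entries. -/
lemma sum_g_eigenvalues {M : Matrix n n ℂ} (hM : M.IsHermitian)
    (U : Matrix n n ℂ) (hU : U ∈ Matrix.unitaryGroup n ℂ) (d : n → ℝ)
    (hMeq : M = U * Matrix.diagonal ((↑) ∘ d) * star U) (g : ℝ → ℝ) :
    ∑ k, g (hM.eigenvalues k) = ∑ k, g (d k) := by
  -- two expressions for the charpoly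
  have h1 : M.charpoly = ∏ i, (X - C ((hM.eigenvalues i : ℂ))) := by
    conv_lhs => rw [hM.spectral_theorem]
    rw [Unitary.conjStarAlgAut_apply]
    rw [my_charpoly_conj _ _ _ (Matrix.mem_unitaryGroup_iff.mp (hM.eigenvectorUnitary).2),
      my_charpoly_diagonal]
    rfl
  have h2 : M.charpoly = ∏ i, (X - C ((d i : ℂ))) := by
    conv_lhs => rw [hMeq]
    rw [my_charpoly_conj _ _ _ (Matrix.mem_unitaryGroup_iff.mp hU), my_charpoly_diagonal]
    rfl
  -- multiset equality over ℂ
  have hroots : (Finset.univ.val.map fun i => ((hM.eigenvalues i : ℂ)))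
      = Finset.univ.val.map fun i => ((d i : ℂ)) := by
    have e1 : M.charpoly = ((Finset.univ.val.map fun i => ((hM.eigenvalues i : ℂ))).map
        fun a => X - C a).prod := by
      rw [h1, Multiset.map_map]; rfl
    have e2 : M.charpoly = ((Finset.univ.val.map fun i => ((d i : ℂ))).map
        fun a => X - C a).prod := by
      rw [h2, Multiset.map_map]; rfl
    have := congrArg Polynomial.roots (e1.symm.trans e2)
    rwa [Polynomial.roots_multiset_prod_X_sub_C, Polynomial.roots_multiset_prod_X_sub_C] at this
  -- pull back to ℝ and apply g
  have hre : (Finset.univ.val.map fun i => hM.eigenvalues i)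
      = Finset.univ.val.map d := by
    have := congrArg (Multiset.map Complex.re) hroots
    simpa [Multiset.map_map, Function.comp] using this
  have := congrArg (Multiset.map g) hre
  calc ∑ k, g (hM.eigenvalues k)
      = ((Finset.univ.val.map fun i => hM.eigenvalues i).map g).sum := by
        rw [Multiset.map_map]; rfl
    _ = ((Finset.univ.val.map d).map g).sum := by rw [hre]
    _ = ∑ k, g (d k) := by rw [Multiset.map_map]; rfl

lemma sum_eigenvalues_eq_one {M : Matrix n n ℂ} (hM : M.IsHermitian)
    (htr : M.trace = 1) : ∑ k, hM.eigenvalues k = 1 := by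
  have h : M.trace = ((∑ k, hM.eigenvalues k : ℝ) : ℂ) := by
    conv_lhs => rw [hM.spectral_theorem]
    rw [Unitary.conjStarAlgAut_apply]
    rw [Matrix.trace_mul_cycle]
    rw [Matrix.mem_unitaryGroup_iff'.mp (hM.eigenvectorUnitary).2]
    rw [Matrix.one_mul, Matrix.trace_diagonal]
    push_cast
    rfl
  rw [htr] at h
  exact_mod_cast h.symm

lemma kron_conjTranspose (A : Matrix n n ℂ) (B : Matrix m m ℂ) :
    (A ⊗ₖ B)ᴴ = Aᴴ ⊗ₖ Bᴴ := by
  ext ⟨i, j⟩ ⟨k, l⟩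
  simp [Matrix.conjTranspose_apply, Matrix.kroneckerMap_apply, mul_comm]

lemma kron_unitary {U : Matrix n n ℂ} {V : Matrix m m ℂ}
    (hU : U ∈ Matrix.unitaryGroup n ℂ) (hV : V ∈ Matrix.unitaryGroup m ℂ) :
    U ⊗ₖ V ∈ Matrix.unitaryGroup (n × m) ℂ := by
  rw [Matrix.mem_unitaryGroup_iff]
  rw [Matrix.star_eq_conjTranspose, kron_conjTranspose, ← Matrix.mul_kronecker_mul]
  rw [← Matrix.star_eq_conjTranspose, ← Matrix.star_eq_conjTranspose,
    Matrix.mem_unitaryGroup_iff.mp hU, Matrix.mem_unitaryGroup_iff.mp hV,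
    Matrix.one_kronecker_one]

lemma vnEntropy_kron {X : Matrix n n ℂ} {Y : Matrix m m ℂ}
    (hX : X.IsHermitian) (hY : Y.IsHermitian) (hXY : (X ⊗ₖ Y).IsHermitian) :
    ∑ k, Real.negMulLog (hXY.eigenvalues k)
      = (∑ k, Real.negMulLog (hX.eigenvalues k)) * (∑ l, hY.eigenvalues l)
        + (∑ k, hX.eigenvalues k) * (∑ l, Real.negMulLog (hY.eigenvalues l)) := by
  have hMeq : X ⊗ₖ Y = ((hX.eigenvectorUnitary : Matrix n n ℂ) ⊗ₖ
        (hY.eigenvectorUnitary : Matrix m m ℂ))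
      * Matrix.diagonal ((↑) ∘ fun p : n × m => hX.eigenvalues p.1 * hY.eigenvalues p.2)
      * star ((hX.eigenvectorUnitary : Matrix n n ℂ) ⊗ₖ (hY.eigenvectorUnitary : Matrix m m ℂ)) := by
    have hstar : star ((hX.eigenvectorUnitary : Matrix n n ℂ) ⊗ₖ
        (hY.eigenvectorUnitary : Matrix m m ℂ))
        = (star (hX.eigenvectorUnitary : Matrix n n ℂ)) ⊗ₖ
          (star (hY.eigenvectorUnitary : Matrix m m ℂ)) := by
      simp only [Matrix.star_eq_conjTranspose]
      exact kron_conjTranspose _ _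
    conv_lhs => rw [hX.spectral_theorem, hY.spectral_theorem]
    rw [Unitary.conjStarAlgAut_apply, Unitary.conjStarAlgAut_apply]
    rw [hstar, Matrix.mul_kronecker_mul, Matrix.mul_kronecker_mul,
      Matrix.diagonal_kronecker_diagonal]
    congr 2
    ext p j
    simp [Matrix.diagonal_apply, Function.comp, Complex.ofReal_mul]
  rw [sum_g_eigenvalues hXY _ (kron_unitary (hX.eigenvectorUnitary).2
    (hY.eigenvectorUnitary).2) _ hMeq Real.negMulLog]
  rw [Fintype.sum_prod_type]
  simp only [Real.negMulLog_mul]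
  rw [Finset.sum_comm]
  simp only [Finset.sum_add_distrib, ← Finset.sum_mul, ← Finset.mul_sum]
  ring

lemma pinch1_trace {dA : ℕ} {ι : Type*} [Fintype ι] [DecidableEq ι]
    (A : ι → Matrix (Fin dA) (Fin dA) ℂ)
    (hproj : ∀ i j, A i * A j = if i = j then A i else 0)
    (hsum : ∑ i, A i = 1)
    (σ : Matrix (Fin dA) (Fin dA) ℂ) : (pinch1 A σ).trace = σ.trace := by
  unfold pinch1
  rw [Matrix.trace_sum]
  have h : ∀ i, (A i * σ * A i).trace = (A i * σ).trace := by
    intro i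
    rw [Matrix.trace_mul_cycle]
    have := hproj i i
    rw [if_pos rfl] at this
    rw [this]
  simp_rw [h]
  rw [← Matrix.trace_sum, ← Finset.sum_mul, hsum, Matrix.one_mul]

lemma pinch2_eq {dA : ℕ} {ι : Type*} [Fintype ι]
    (A : ι → Matrix (Fin dA) (Fin dA) ℂ)
    (ρ σ : Matrix (Fin dA) (Fin dA) ℂ) :
    pinch2 A (ρ ⊗ₖ σ) = (pinch1 A ρ) ⊗ₖ (pinch1 A σ) := by
  unfold pinch2 pinch1
  rw [Fintype.sum_prod_type]
  have h : ∀ i j, (A i ⊗ₖ A j) * (ρ ⊗ₖ σ) * (A i ⊗ₖ A j)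
      = (A i * ρ * A i) ⊗ₖ (A j * σ * A j) := by
    intro i j
    rw [← Matrix.mul_kronecker_mul, ← Matrix.mul_kronecker_mul]
  simp_rw [h]
  ext ⟨a, b⟩ ⟨c, d⟩
  simp only [Matrix.sum_apply, Matrix.kroneckerMap_apply, Finset.sum_mul_sum]

lemma vnEntropy_congr {k : Type*} [Fintype k] [DecidableEq k]
    {M N : Matrix k k ℂ} (h : M = N) (hM : M.IsHermitian) (hN : N.IsHermitian) :
    ∑ i, Real.negMulLog (hM.eigenvalues i) = ∑ i, Real.negMulLog (hN.eigenvalues i) := by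
  subst h; rfl

end Aux

/-- Axiom 6 (additivity): for independent systems,
`S(Φ²(ρ ⊗ σ)) − S(ρ ⊗ σ) = (S(φ_A(ρ)) − S(ρ)) + (S(φ_A(σ)) − S(σ))`. -/
theorem irreality_additive {dA : ℕ} {ι : Type*} [Fintype ι] [DecidableEq ι]
    (A : ι → Matrix (Fin dA) (Fin dA) ℂ)
    (hproj : ∀ i j, A i * A j = if i = j then A i else 0)
    (hherm : ∀ i, (A i)ᴴ = A i)
    (hsum : ∑ i, A i = 1)
    (ρ σ : Matrix (Fin dA) (Fin dA) ℂ)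
    (hρ : ρ.PosSemidef) (htrρ : ρ.trace = 1)
    (hσ : σ.PosSemidef) (htrσ : σ.trace = 1)
    (hprod : (ρ ⊗ₖ σ).IsHermitian)
    (hΦ2 : (pinch2 A (ρ ⊗ₖ σ)).IsHermitian)
    (hφρ : (pinch1 A ρ).IsHermitian)
    (hφσ : (pinch1 A σ).IsHermitian) :
    vnEntropy hΦ2 - vnEntropy hprod
      = (vnEntropy hφρ - vnEntropy hρ.isHermitian)
        + (vnEntropy hφσ - vnEntropy hσ.isHermitian) := by
  have hP2 : pinch2 A (ρ ⊗ₖ σ) = pinch1 A ρ ⊗ₖ pinch1 A σ := pinch2_eq A ρ σ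
  have hPQ : (pinch1 A ρ ⊗ₖ pinch1 A σ).IsHermitian := hP2 ▸ hΦ2
  have e0 : vnEntropy hΦ2 = vnEntropy hPQ := vnEntropy_congr hP2 _ _
  have h1 := vnEntropy_kron hρ.isHermitian hσ.isHermitian hprod
  have h2 := vnEntropy_kron hφρ hφσ hPQ
  have sρ : ∑ k, hρ.isHermitian.eigenvalues k = 1 := sum_eigenvalues_eq_one _ htrρ
  have sσ : ∑ k, hσ.isHermitian.eigenvalues k = 1 := sum_eigenvalues_eq_one _ htrσ
  have sP : ∑ k, hφρ.eigenvalues k = 1 := by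
    apply sum_eigenvalues_eq_one
    rw [pinch1_trace A hproj hsum ρ, htrρ]
  have sQ : ∑ k, hφσ.eigenvalues k = 1 := by
    apply sum_eigenvalues_eq_one
    rw [pinch1_trace A hproj hsum σ, htrσ]
  rw [e0]
  show (∑ k, Real.negMulLog (hPQ.eigenvalues k)) - (∑ k, Real.negMulLog (hprod.eigenvalues k)) = _
  rw [h1, h2, sρ, sσ, sP, sQ]
  unfold vnEntropy
  ring
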